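/- arXiv:2102.06333 — 2 statements merged into one kernel-verified Lean document; each statement's English description precedes it below -/
import Mathlib

section
/- If g is μ-strongly convex-concave (μ > 0), then the proximal operator prox_{(1/θ)g}(z') := argmin_x max_y [g(x,y) + (θ/2)‖x-x'‖² - (θ/2)‖y-y'‖²] is a contraction with factor 1 - μ/(θ+μ): for all z₁, z₂, ‖prox_{(1/θ)g}(z₁) - prox_{(1/θ)g}(z₂)‖ ≤ (1 - μ/(θ+μ))‖z₁ - z₂‖. -/
set_option maxHeartbeats 1000000

open Set

private lemma lim_lemma {c s : ℝ} (hc : 0 ≤ c)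
    (h : ∀ a : ℝ, 0 < a → a < 1 → (1 - a) * c ≤ s) : c ≤ s := by
  refine le_of_forall_pos_le_add fun ε hε => ?_
  set a := min (1/2 : ℝ) (ε / (c + 1)) with ha
  have ha1 : 0 < a := lt_min (by norm_num) (by positivity)
  have ha2 : a < 1 := lt_of_le_of_lt (min_le_left _ _) (by norm_num)
  have h1 := h a ha1 ha2
  have hac : a * c ≤ ε := by
    have h2 : a ≤ ε / (c + 1) := min_le_right _ _
    have h3 : a * c ≤ ε / (c + 1) * c := mul_le_mul_of_nonneg_right h2 hc
    have h4 : ε / (c + 1) * c ≤ ε := by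
      rw [div_mul_eq_mul_div, div_le_iff₀ (by linarith)]
      nlinarith [hε.le]
    linarith
  nlinarith

private lemma saddle_growth {E : Type*} [NormedAddCommGroup E] [InnerProductSpace ℝ E]
    (f : E → ℝ) (m : ℝ) (hm : 0 ≤ m) (u v : E)
    (hcomb : ∀ a b : ℝ, 0 < a → 0 < b → a + b = 1 →
      f (a • u + b • v) ≤ a * f u + b * f v - a * b * (m / 2) * ‖u - v‖ ^ 2)
    (hmin : ∀ x, f v ≤ f x) :
    f v + m / 2 * ‖u - v‖ ^ 2 ≤ f u := by
  have hc : (0:ℝ) ≤ m / 2 * ‖u - v‖ ^ 2 := by positivity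
  have key : ∀ a : ℝ, 0 < a → a < 1 → (1 - a) * (m / 2 * ‖u - v‖ ^ 2) ≤ f u - f v := by
    intro a ha ha1
    have hb : 0 < 1 - a := by linarith
    have h1 := hcomb a (1 - a) ha hb (by ring)
    have h2 := hmin (a • u + (1 - a) • v)
    nlinarith
  have := lim_lemma hc key
  linarith

private lemma quad_comb {E : Type*} [NormedAddCommGroup E] [InnerProductSpace ℝ E]
    (u v w : E) (a b : ℝ) (hab : a + b = 1) :
    ‖(a • u + b • v) - w‖ ^ 2 = a * ‖u - w‖ ^ 2 + b * ‖v - w‖ ^ 2 - a * b * ‖u - v‖ ^ 2 := by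
  obtain rfl : b = 1 - a := by linarith
  have hw : a • u + (1 - a) • v - w = a • (u - w) + (1 - a) • (v - w) := by module
  have e1 : ‖a • (u - w) + (1 - a) • (v - w)‖ ^ 2
      = a ^ 2 * ‖u - w‖ ^ 2 + 2 * (a * (1 - a)) * inner ℝ (u - w) (v - w)
        + (1 - a) ^ 2 * ‖v - w‖ ^ 2 := by
    rw [norm_add_sq_real, real_inner_smul_left, real_inner_smul_right, norm_smul, norm_smul,
      Real.norm_eq_abs, Real.norm_eq_abs, mul_pow, mul_pow, sq_abs, sq_abs]
    ring
  have e2 : ‖u - v‖ ^ 2 = ‖u - w‖ ^ 2 - 2 * inner ℝ (u - w) (v - w) + ‖v - w‖ ^ 2 := by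
    rw [show u - v = (u - w) - (v - w) by abel, norm_sub_sq_real]
  rw [hw, e1, e2]
  ring

private lemma four_sq {E : Type*} [NormedAddCommGroup E] [InnerProductSpace ℝ E]
    (a b c d : E) :
    ‖a - c‖ ^ 2 - ‖b - c‖ ^ 2 + ‖b - d‖ ^ 2 - ‖a - d‖ ^ 2 = 2 * inner ℝ (b - a) (c - d) := by
  simp only [norm_sub_sq_real, inner_sub_left, inner_sub_right]
  ring

/-- Prox contraction for strongly convex-concave functions: if `g` is `μ`-strongly
convex-concave (`μ > 0`) and, for each `z' = (x',y')`, `P z'` is a saddle point of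
`(x,y) ↦ g(x,y) + (θ/2)‖x-x'‖² - (θ/2)‖y-y'‖²` (i.e. `P = prox_{(1/θ)g}`), then `P` is a
contraction with factor `1 - μ/(θ+μ)` (in the `ℓ₂` product norm). -/
theorem prox_strongly_convex_concave_contraction
    {E F : Type*} [NormedAddCommGroup E] [InnerProductSpace ℝ E]
    [NormedAddCommGroup F] [InnerProductSpace ℝ F]
    (g : E → F → ℝ) (μ θ : ℝ) (hμ : 0 < μ) (hθ : 0 < θ)
    (hconv : ∀ y : F, StrongConvexOn univ μ (fun x => g x y))
    (hconc : ∀ x : E, StrongConcaveOn univ μ (fun y => g x y))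
    (P : E × F → E × F)
    (hsaddle : ∀ z' : E × F, ∀ (x : E) (y : F),
      g (P z').1 y + θ / 2 * ‖(P z').1 - z'.1‖ ^ 2 - θ / 2 * ‖y - z'.2‖ ^ 2 ≤
        g (P z').1 (P z').2 + θ / 2 * ‖(P z').1 - z'.1‖ ^ 2 - θ / 2 * ‖(P z').2 - z'.2‖ ^ 2 ∧
      g (P z').1 (P z').2 + θ / 2 * ‖(P z').1 - z'.1‖ ^ 2 - θ / 2 * ‖(P z').2 - z'.2‖ ^ 2 ≤
        g x (P z').2 + θ / 2 * ‖x - z'.1‖ ^ 2 - θ / 2 * ‖(P z').2 - z'.2‖ ^ 2) :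
    ∀ z₁ z₂ : E × F,
      Real.sqrt (‖(P z₁).1 - (P z₂).1‖ ^ 2 + ‖(P z₁).2 - (P z₂).2‖ ^ 2) ≤
        (1 - μ / (θ + μ)) * Real.sqrt (‖z₁.1 - z₂.1‖ ^ 2 + ‖z₁.2 - z₂.2‖ ^ 2) := by
  intro z₁ z₂
  set x1 := (P z₁).1 with hx1
  set y1 := (P z₁).2 with hy1
  set x2 := (P z₂).1 with hx2
  set y2 := (P z₂).2 with hy2
  have hmθ : (0:ℝ) ≤ μ + θ := by linarith
  -- x-side inequality for z₁ : minimizer growth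
  have A1 : (fun x => g x y1 + θ / 2 * ‖x - z₁.1‖ ^ 2) x1 + (μ + θ) / 2 * ‖x2 - x1‖ ^ 2 ≤
      (fun x => g x y1 + θ / 2 * ‖x - z₁.1‖ ^ 2) x2 := by
    refine saddle_growth (fun x => g x y1 + θ / 2 * ‖x - z₁.1‖ ^ 2) (μ + θ) hmθ x2 x1 ?_ ?_
    · intro a b ha hb hab
      have hg := (hconv y1).2 (mem_univ x2) (mem_univ x1) ha.le hb.le hab
      have hq := quad_comb x2 x1 z₁.1 a b hab
      simp only [smul_eq_mul] at hg
      rw [hq]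
      linarith [hg]
    · intro x
      have h := (hsaddle z₁ x y1).2
      simp only [← hx1, ← hy1] at h
      linarith
  have A2 : (fun x => g x y2 + θ / 2 * ‖x - z₂.1‖ ^ 2) x2 + (μ + θ) / 2 * ‖x1 - x2‖ ^ 2 ≤
      (fun x => g x y2 + θ / 2 * ‖x - z₂.1‖ ^ 2) x1 := by
    refine saddle_growth (fun x => g x y2 + θ / 2 * ‖x - z₂.1‖ ^ 2) (μ + θ) hmθ x1 x2 ?_ ?_
    · intro a b ha hb hab
      have hg := (hconv y2).2 (mem_univ x1) (mem_univ x2) ha.le hb.le hab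
      have hq := quad_comb x1 x2 z₂.1 a b hab
      simp only [smul_eq_mul] at hg
      rw [hq]
      linarith [hg]
    · intro x
      have h := (hsaddle z₂ x y2).2
      simp only [← hx2, ← hy2] at h
      linarith
  have B1 : (fun y => -g x1 y + θ / 2 * ‖y - z₁.2‖ ^ 2) y1 + (μ + θ) / 2 * ‖y2 - y1‖ ^ 2 ≤
      (fun y => -g x1 y + θ / 2 * ‖y - z₁.2‖ ^ 2) y2 := by
    refine saddle_growth (fun y => -g x1 y + θ / 2 * ‖y - z₁.2‖ ^ 2) (μ + θ) hmθ y2 y1 ?_ ?_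
    · intro a b ha hb hab
      have hg := (hconc x1).2 (mem_univ y2) (mem_univ y1) ha.le hb.le hab
      have hq := quad_comb y2 y1 z₁.2 a b hab
      simp only [smul_eq_mul] at hg
      rw [hq]
      linarith [hg]
    · intro y
      have h := (hsaddle z₁ x1 y).1
      simp only [← hx1, ← hy1] at h
      linarith
  have B2 : (fun y => -g x2 y + θ / 2 * ‖y - z₂.2‖ ^ 2) y2 + (μ + θ) / 2 * ‖y1 - y2‖ ^ 2 ≤
      (fun y => -g x2 y + θ / 2 * ‖y - z₂.2‖ ^ 2) y1 := by
    refine saddle_growth (fun y => -g x2 y + θ / 2 * ‖y - z₂.2‖ ^ 2) (μ + θ) hmθ y1 y2 ?_ ?_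
    · intro a b ha hb hab
      have hg := (hconc x2).2 (mem_univ y1) (mem_univ y2) ha.le hb.le hab
      have hq := quad_comb y1 y2 z₂.2 a b hab
      simp only [smul_eq_mul] at hg
      rw [hq]
      linarith [hg]
    · intro y
      have h := (hsaddle z₂ x2 y).1
      simp only [← hx2, ← hy2] at h
      linarith
  dsimp only at A1 A2 B1 B2
  rw [norm_sub_rev x2 x1] at A1
  rw [norm_sub_rev y2 y1] at B1
  have hxid : θ * (‖x2 - z₁.1‖ ^ 2 - ‖x1 - z₁.1‖ ^ 2 + ‖x1 - z₂.1‖ ^ 2 - ‖x2 - z₂.1‖ ^ 2)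
      = θ * (2 * inner ℝ (x1 - x2) (z₁.1 - z₂.1)) := by
    rw [four_sq x2 x1 z₁.1 z₂.1]
  have hyid : θ * (‖y2 - z₁.2‖ ^ 2 - ‖y1 - z₁.2‖ ^ 2 + ‖y1 - z₂.2‖ ^ 2 - ‖y2 - z₂.2‖ ^ 2)
      = θ * (2 * inner ℝ (y1 - y2) (z₁.2 - z₂.2)) := by
    rw [four_sq y2 y1 z₁.2 z₂.2]
  have key : (μ + θ) * (‖x1 - x2‖ ^ 2 + ‖y1 - y2‖ ^ 2) ≤
      θ * (inner ℝ (x1 - x2) (z₁.1 - z₂.1) + inner ℝ (y1 - y2) (z₁.2 - z₂.2)) := by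
    linarith [A1, A2, B1, B2, hxid, hyid]
  -- Cauchy–Schwarz
  have hi1 : (inner ℝ (x1 - x2) (z₁.1 - z₂.1) : ℝ) ≤ ‖x1 - x2‖ * ‖z₁.1 - z₂.1‖ :=
    real_inner_le_norm _ _
  have hi2 : (inner ℝ (y1 - y2) (z₁.2 - z₂.2) : ℝ) ≤ ‖y1 - y2‖ * ‖z₁.2 - z₂.2‖ :=
    real_inner_le_norm _ _
  set a := ‖x1 - x2‖ with hadef
  set b := ‖y1 - y2‖ with hbdef
  set c := ‖z₁.1 - z₂.1‖ with hcdef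
  set d := ‖z₁.2 - z₂.2‖ with hddef
  have ha0 : 0 ≤ a := norm_nonneg _
  have hb0 : 0 ≤ b := norm_nonneg _
  have hc0 : 0 ≤ c := norm_nonneg _
  have hd0 : 0 ≤ d := norm_nonneg _
  set D := Real.sqrt (a ^ 2 + b ^ 2) with hDdef
  set D' := Real.sqrt (c ^ 2 + d ^ 2) with hD'def
  have hD0 : 0 ≤ D := Real.sqrt_nonneg _
  have hD'0 : 0 ≤ D' := Real.sqrt_nonneg _
  have hD2 : D ^ 2 = a ^ 2 + b ^ 2 := Real.sq_sqrt (by positivity)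
  have hD'2 : D' ^ 2 = c ^ 2 + d ^ 2 := Real.sq_sqrt (by positivity)
  have key2 : (μ + θ) * D ^ 2 ≤ θ * (a * c + b * d) := by
    have h := mul_le_mul_of_nonneg_left (add_le_add hi1 hi2) hθ.le
    rw [hD2]; linarith
  have hprod : a * c + b * d ≤ D * D' := by
    have hsq : (a * c + b * d) ^ 2 ≤ (D * D') ^ 2 := by
      rw [mul_pow, hD2, hD'2]
      nlinarith [sq_nonneg (a * d - b * c)]
    have hS0 : 0 ≤ a * c + b * d := by positivity
    calc a * c + b * d = Real.sqrt ((a * c + b * d) ^ 2) := (Real.sqrt_sq hS0).symm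
      _ ≤ Real.sqrt ((D * D') ^ 2) := Real.sqrt_le_sqrt hsq
      _ = D * D' := Real.sqrt_sq (mul_nonneg hD0 hD'0)
  have hfrac : 1 - μ / (θ + μ) = θ / (θ + μ) := by
    field_simp
    ring
  rw [hfrac, div_mul_eq_mul_div, le_div_iff₀ (by linarith : (0:ℝ) < θ + μ)]
  have key3 : (μ + θ) * D ^ 2 ≤ θ * (D * D') := by
    calc (μ + θ) * D ^ 2 ≤ θ * (a * c + b * d) := key2
      _ ≤ θ * (D * D') := mul_le_mul_of_nonneg_left hprod hθ.le
  rcases eq_or_lt_of_le hD0 with h0 | hpos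
  · rw [← h0, zero_mul]; positivity
  · have h' : ((μ + θ) * D) * D ≤ (θ * D') * D := by
      have e : (μ + θ) * D ^ 2 = ((μ + θ) * D) * D := by ring
      have e' : θ * (D * D') = (θ * D') * D := by ring
      linarith [key3, e.symm.le, e'.le]
    have h'' := le_of_mul_le_mul_right h' hpos
    linarith
end

section
/- Weighted geometric decay sum: for p ∈ (0,1], γμ ≤ p/2, and w_k = (1 - γμ/8)^{1-k}, one has ∑_{k=0}^K w_k (1-p)^k ≤ (8+p)/(4p). -/
open Finset

/-- Weighted geometric decay sum: for `p ∈ (0,1]`, `γμ ≤ p/2`, and `w_k = (1 - γμ/8)^{1-k}`,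
one has `∑_{k=0}^K w_k (1-p)^k ≤ (8+p)/(4p)`. -/
theorem weighted_geometric_decay_sum
    (p γ μ : ℝ) (hp0 : 0 < p) (hp1 : p ≤ 1) (hγ : 0 < γ) (hμ : 0 < μ)
    (hstep : γ * μ ≤ p / 2) (K : ℕ) :
    ∑ k ∈ range (K + 1), (1 - γ * μ / 8) ^ (1 - (k : ℤ)) * (1 - p) ^ k ≤ (8 + p) / (4 * p) := by
  set a : ℝ := 1 - γ * μ / 8 with ha
  have hγμ : 0 < γ * μ := mul_pos hγ hμ
  have ha0 : (0:ℝ) < a := by simp only [ha]; nlinarith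
  have ha1 : a ≤ 1 := by simp only [ha]; nlinarith
  have hr0 : (0:ℝ) ≤ 1 - p / 2 := by linarith
  have hr1 : 1 - p / 2 < 1 := by linarith
  have hterm : ∀ k : ℕ, a ^ (1 - (k : ℤ)) * (1 - p) ^ k ≤ (1 - p / 2) ^ k := by
    intro k
    have h1 : a ^ (1 - (k : ℤ)) = a / a ^ k := by
      rw [zpow_sub₀ (ne_of_gt ha0), zpow_one, zpow_natCast]
    rw [h1]
    have h2 : a / a ^ k * (1 - p) ^ k = a * ((1 - p) / a) ^ k := by
      rw [div_pow]; field_simp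
    rw [h2]
    have hq0 : (0:ℝ) ≤ (1 - p) / a := div_nonneg (by linarith) ha0.le
    have hq : (1 - p) / a ≤ 1 - p / 2 := by
      rw [div_le_iff₀ ha0]
      simp only [ha]; nlinarith
    calc a * ((1 - p) / a) ^ k ≤ 1 * ((1 - p) / a) ^ k := by
          apply mul_le_mul_of_nonneg_right ha1 (pow_nonneg hq0 k)
      _ = ((1 - p) / a) ^ k := one_mul _
      _ ≤ (1 - p / 2) ^ k := pow_le_pow_left₀ hq0 hq k
  calc ∑ k ∈ range (K + 1), a ^ (1 - (k : ℤ)) * (1 - p) ^ k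
      ≤ ∑ k ∈ range (K + 1), (1 - p / 2) ^ k :=
        Finset.sum_le_sum fun k _ => hterm k
    _ = (1 - (1 - p / 2) ^ (K + 1)) / (1 - (1 - p / 2)) := by
        rw [geom_sum_eq (ne_of_lt hr1)]
        rw [div_eq_div_iff (by linarith) (by linarith)]
        ring
    _ ≤ 1 / (1 - (1 - p / 2)) := by
        apply div_le_div_of_nonneg_right _ (by linarith)
        have := pow_nonneg hr0 (K + 1)
        linarith
    _ ≤ (8 + p) / (4 * p) := by
        rw [div_le_div_iff₀ (by linarith) (by positivity)]
        nlinarith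
end
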